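/- For every natural number n, the alternating sum ∑_{k=0}^n (-1)^k * C(n,k) * Cat(k) * C(2n-2k, n-k) equals C(n, ⌊n/2⌋)^2, where Cat(k) = C(2k,k)/(k+1) is the k-th Catalan number. -/

import Mathlib

open Finset

namespace Stmt0Aux

def ch (n k : ℕ) : ℚ := (n.choose k : ℚ)
def cb (m : ℕ) : ℚ := (Nat.centralBinom m : ℚ)
def ct (m : ℕ) : ℚ := (catalan m : ℚ)

lemma cb_succ (m : ℕ) : ((m : ℚ) + 1) * cb (m + 1) = 2 * (2 * m + 1) * cb m := by
  have h := congrArg (fun x : ℕ => (x : ℚ)) (Nat.succ_mul_centralBinom_succ m)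
  push_cast at h
  unfold cb
  linear_combination h

lemma ct_mul (m : ℕ) : ((m : ℚ) + 1) * ct m = cb m := by
  have h := congrArg (fun x : ℕ => (x : ℚ)) (succ_mul_catalan_eq_centralBinom m)
  push_cast at h
  unfold ct cb
  linear_combination h

lemma ct_succ (k : ℕ) : ((k : ℚ) + 2) * ct (k + 1) = 2 * (2 * k + 1) * ct k := by
  have h1 := ct_mul (k + 1)
  have h2 := cb_succ k
  have h3 := ct_mul k
  have hk1 : ((k : ℚ) + 1) ≠ 0 := by positivity
  push_cast at h1
  have key : ((k : ℚ) + 1) * (((k : ℚ) + 2) * ct (k + 1)) =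
      ((k : ℚ) + 1) * (2 * (2 * k + 1) * ct k) := by
    linear_combination ((k : ℚ) + 1) * h1 + h2 - 2 * (2 * (k : ℚ) + 1) * h3
  exact mul_left_cancel₀ hk1 key

lemma ch_row (k j : ℕ) : ((j : ℚ) + 1) * ch (k + j + 1) k = ((k : ℚ) + j + 1) * ch (k + j) k := by
  have h1 := Nat.add_one_mul_choose_eq (k + j) k
  have h2 := Nat.choose_succ_right_eq (k + j + 1) k
  have hs : k + j + 1 - k = j + 1 := by omega
  rw [hs] at h2
  have h : (k + j + 1) * (k + j).choose k = (k + j + 1).choose k * (j + 1) := h1.trans h2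
  have hq := congrArg (fun x : ℕ => (x : ℚ)) h
  push_cast at hq
  unfold ch
  linear_combination -hq

lemma ch_col (k j : ℕ) :
    ((k : ℚ) + 1) * ch (k + j + 1) (k + 1) = ((j : ℚ) + 1) * ch (k + j + 1) k := by
  have h2 := Nat.choose_succ_right_eq (k + j + 1) k
  have hs : k + j + 1 - k = j + 1 := by omega
  rw [hs] at h2
  have hq := congrArg (fun x : ℕ => (x : ℚ)) h2
  push_cast at hq
  unfold ch
  linear_combination hq

lemma ch_diag (n k : ℕ) : ((k : ℚ) + 1) * ch (n + 1) (k + 1) = ((n : ℚ) + 1) * ch n k := by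
  have h1 := Nat.add_one_mul_choose_eq n k
  have hq := congrArg (fun x : ℕ => (x : ℚ)) h1
  push_cast at hq
  unfold ch
  linear_combination -hq

def P2 (x : ℚ) : ℚ := (x + 3) ^ 2 * (2 * x + 3)
def P1 (x : ℚ) : ℚ := -4 * (2 * x ^ 2 + 8 * x + 7)
def P0 (x : ℚ) : ℚ := -16 * (x + 1) ^ 2 * (2 * x + 5)

def PP (x y : ℚ) : ℚ :=
  (-256) + (500)*y^1 + (228)*y^2 + (-448)*y^3 + (80)*y^4 + (-1432)*x^1 + (1596)*x^1*y^1 +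
  (1452)*x^1*y^2 + (-1384)*x^1*y^3 + (192)*x^1*y^4 + (-3108)*x^2 + (1548)*x^2*y^1 +
  (2952)*x^2*y^2 + (-1560)*x^2*y^3 + (144)*x^2*y^4 + (-3372)*x^3 + (52)*x^3*y^1 +
  (2640)*x^3*y^2 + (-752)*x^3*y^3 + (32)*x^3*y^4 + (-1936)*x^4 + (-736)*x^4*y^1 +
  (1072)*x^4*y^2 + (-128)*x^4*y^3 + (-560)*x^5 + (-400)*x^5*y^1 + (160)*x^5*y^2 +
  (-64)*x^6 + (-64)*x^6*y^1

def Fq (n k : ℕ) : ℚ := (-1) ^ k * ch n k * ct k * cb (n - k)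

def Hq (n k : ℕ) : ℚ :=
  (-1) ^ k * k * PP n k * ch n k * ct k * cb (n - k) /
    (((n : ℚ) + 2) * ((n + 1 - k : ℕ) : ℚ) ^ 2 * ((n + 2 - k : ℕ) : ℚ) ^ 2)

def Sq (n : ℕ) : ℚ := ∑ k ∈ Finset.range (n + 1), Fq n k

def Aq (n : ℕ) : ℚ := (ch n (n / 2)) ^ 2

lemma key (k j : ℕ) :
    P2 (k + j + 1) * Fq (k + j + 3) k + P1 (k + j + 1) * Fq (k + j + 2) k +
      P0 (k + j + 1) * Fq (k + j + 1) k
    = Hq (k + j + 1) (k + 1) - Hq (k + j + 1) k := by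
  unfold Fq Hq
  have s1 : k + j + 3 - k = j + 3 := by omega
  have s2 : k + j + 2 - k = j + 2 := by omega
  have s3 : k + j + 1 - k = j + 1 := by omega
  have s4 : k + j + 1 - (k + 1) = j := by omega
  have s5 : k + j + 1 + 1 - (k + 1) = j + 1 := by omega
  have s6 : k + j + 1 + 2 - (k + 1) = j + 2 := by omega
  have s7 : k + j + 1 + 1 - k = j + 2 := by omega
  have s8 : k + j + 1 + 2 - k = j + 3 := by omega
  simp only [s1, s2, s3, s4, s5, s6, s7, s8]
  have hb1 := cb_succ j
  have hb2 := cb_succ (j + 1)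
  have hb3 := cb_succ (j + 2)
  have hc := ct_succ k
  have ha2 := ch_row k (j + 1)
  have ha3 := ch_row k (j + 2)
  have hac := ch_col k j
  have hj1 : ((j : ℚ) + 1) ≠ 0 := by positivity
  have hj2 : ((j : ℚ) + 2) ≠ 0 := by positivity
  have hj3 : ((j : ℚ) + 3) ≠ 0 := by positivity
  have hk1 : ((k : ℚ) + 1) ≠ 0 := by positivity
  have hk2 : ((k : ℚ) + 2) ≠ 0 := by positivity
  have hn2 : ((k : ℚ) + (j : ℚ) + 3) ≠ 0 := by positivity
  push_cast at hb2 hb3 ha2 ha3 ⊢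
  have sj1 : k + (j + 1) + 1 = k + j + 2 := by omega
  have sj2 : k + (j + 2) + 1 = k + j + 3 := by omega
  have sj3 : k + (j + 1) = k + j + 1 := by omega
  have sj4 : k + (j + 2) = k + j + 2 := by omega
  rw [sj1, sj3] at ha2
  rw [sj2, sj4] at ha3
  have eb1 : cb (j + 1) = 2 * (2 * j + 1) * cb j / (j + 1) := by
    field_simp; linear_combination hb1
  have eb2 : cb (j + 2) = 2 * (2 * j + 3) * cb (j + 1) / (j + 2) := by
    field_simp; linear_combination hb2
  have eb3 : cb (j + 3) = 2 * (2 * j + 5) * cb (j + 2) / (j + 3) := by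
    field_simp; linear_combination hb3
  have ec : ct (k + 1) = 2 * (2 * k + 1) * ct k / (k + 2) := by
    field_simp; linear_combination hc
  have ea2 : ch (k + j + 2) k = ((k : ℚ) + j + 2) * ch (k + j + 1) k / (j + 2) := by
    field_simp; linear_combination ha2
  have ea3 : ch (k + j + 3) k = ((k : ℚ) + j + 3) * ch (k + j + 2) k / (j + 3) := by
    field_simp; linear_combination ha3
  have eac : ch (k + j + 1) (k + 1) = ((j : ℚ) + 1) * ch (k + j + 1) k / (k + 1) := by
    field_simp; linear_combination hac
  rw [eb3, eb2, eb1, ec, ea3, ea2, eac, pow_succ]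
  unfold P2 P1 P0 PP
  field_simp
  ring

lemma boundary (n : ℕ) :
    P2 n * Fq (n + 2) n + P1 n * Fq (n + 1) n + P0 n * Fq n n
      + P2 n * (Fq (n + 2) (n + 1) + Fq (n + 2) (n + 2)) + P1 n * Fq (n + 1) (n + 1)
    = - Hq n n := by
  unfold Fq Hq
  have s1 : n + 2 - n = 2 := by omega
  have s2 : n + 1 - n = 1 := by omega
  have s3 : n - n = 0 := by omega
  have s4 : n + 2 - (n + 1) = 1 := by omega
  have s5 : n + 2 - (n + 2) = 0 := by omega
  have s6 : n + 1 - (n + 1) = 0 := by omega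
  simp only [s1, s2, s3, s4, s5, s6]
  have c0 : cb 0 = 1 := by unfold cb; norm_num [Nat.centralBinom]
  have c1 : cb 1 = 2 := by unfold cb; norm_num [Nat.centralBinom]
  have c2 : cb 2 = 6 := by unfold cb; rfl
  have d0 : ch n n = 1 := by unfold ch; simp
  have d1 : ch (n + 1) (n + 1) = 1 := by unfold ch; simp
  have d2 : ch (n + 2) (n + 2) = 1 := by unfold ch; simp
  have d3 : ch (n + 1) n = (n : ℚ) + 1 := by
    unfold ch; rw [Nat.choose_succ_self_right]; push_cast; ring
  have d4 : ch (n + 2) (n + 1) = (n : ℚ) + 2 := by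
    unfold ch; rw [Nat.choose_succ_self_right]; push_cast; ring
  have d5 : ch (n + 2) n = ((n : ℚ) + 1) * ((n : ℚ) + 2) / 2 := by
    have h := ch_row n 1
    push_cast at h
    rw [show n + 1 + 1 = n + 2 by omega] at h
    rw [d3] at h
    linarith
  have hn2 : ((n : ℚ) + 2) ≠ 0 := by positivity
  have hn3 : ((n : ℚ) + 3) ≠ 0 := by positivity
  have hc1 := ct_succ n
  have hc2 := ct_succ (n + 1)
  push_cast at hc2
  rw [show n + 1 + 1 = n + 2 by omega] at hc2
  have e1 : ct (n + 1) = 2 * (2 * n + 1) * ct n / (n + 2) := by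
    field_simp; linear_combination hc1
  have e2 : ct (n + 2) = 2 * (2 * n + 3) * ct (n + 1) / (n + 3) := by
    field_simp; linear_combination hc2
  have pw1 : (-1 : ℚ) ^ (n + 1) = -(-1) ^ n := by rw [pow_succ]; ring
  have pw2 : (-1 : ℚ) ^ (n + 2) = (-1) ^ n := by rw [pow_add]; norm_num
  rw [c0, c1, c2, d0, d1, d2, d3, d4, d5, e2, e1, pw1, pw2]
  unfold P2 P1 P0 PP
  push_cast
  field_simp
  ring

lemma Hq_zero (n : ℕ) : Hq n 0 = 0 := by
  unfold Hq
  simp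

lemma recS (n : ℕ) :
    P2 n * Sq (n + 2) + P1 n * Sq (n + 1) + P0 n * Sq n = 0 := by
  have hsum : ∑ k ∈ Finset.range n,
      (P2 n * Fq (n + 2) k + P1 n * Fq (n + 1) k + P0 n * Fq n k)
      = Hq n n - Hq n 0 := by
    rw [← Finset.sum_range_sub (f := fun k => Hq n k)]
    apply Finset.sum_congr rfl
    intro k hk
    rw [Finset.mem_range] at hk
    obtain ⟨j, rfl⟩ : ∃ j, n = k + j + 1 := ⟨n - k - 1, by omega⟩
    have hkey := key k j
    rw [show k + j + 1 + 2 = k + j + 3 by omega, show k + j + 1 + 1 = k + j + 2 by omega]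
    push_cast at hkey ⊢
    linear_combination hkey
  have hb := boundary n
  have hsplit : P2 n * Sq (n + 2) + P1 n * Sq (n + 1) + P0 n * Sq n
      = (∑ k ∈ Finset.range n,
          (P2 n * Fq (n + 2) k + P1 n * Fq (n + 1) k + P0 n * Fq n k))
        + (P2 n * Fq (n + 2) n + P1 n * Fq (n + 1) n + P0 n * Fq n n
            + P2 n * (Fq (n + 2) (n + 1) + Fq (n + 2) (n + 2)) + P1 n * Fq (n + 1) (n + 1)) := by
    unfold Sq
    rw [show n + 2 + 1 = (n + 1) + 1 + 1 by omega,
      Finset.sum_range_succ (f := fun k => Fq (n + 2) k),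
      Finset.sum_range_succ (f := fun k => Fq (n + 2) k),
      Finset.sum_range_succ (f := fun k => Fq (n + 2) k),
      show n + 1 + 1 = (n + 1) + 1 by omega,
      Finset.sum_range_succ (f := fun k => Fq (n + 1) k),
      Finset.sum_range_succ (f := fun k => Fq (n + 1) k),
      Finset.sum_range_succ (f := fun k => Fq n k)]
    rw [Finset.sum_add_distrib, Finset.sum_add_distrib, ← Finset.mul_sum, ← Finset.mul_sum,
      ← Finset.mul_sum]
    ring
  rw [hsplit, hsum, hb, Hq_zero]
  ring

lemma recA (n : ℕ) :
    P2 n * Aq (n + 2) + P1 n * Aq (n + 1) + P0 n * Aq n = 0 := by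
  rcases Nat.even_or_odd n with ⟨m, rfl⟩ | ⟨m, rfl⟩
  · have e0 : (m + m) / 2 = m := by omega
    have e1 : (m + m + 1) / 2 = m := by omega
    have e2 : (m + m + 2) / 2 = m + 1 := by omega
    unfold Aq
    rw [e0, e1, e2]
    have r1 := ch_row m m
    have r2 := ch_diag (m + m + 1) m
    push_cast at r1 r2
    rw [show m + m + 1 + 1 = m + m + 2 by omega] at r2
    have hm1 : ((m : ℚ) + 1) ≠ 0 := by positivity
    have f1 : ch (m + m + 1) m = ((m : ℚ) + m + 1) * ch (m + m) m / (m + 1) := by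
      field_simp; linear_combination r1
    have f2 : ch (m + m + 2) (m + 1) = ((m : ℚ) + m + 2) * ch (m + m + 1) m / (m + 1) := by
      field_simp; linear_combination r2
    rw [f2, f1]
    unfold P2 P1 P0
    push_cast
    field_simp
    ring
  · have e0 : (2 * m + 1) / 2 = m := by omega
    have e1 : (2 * m + 1 + 1) / 2 = m + 1 := by omega
    have e2 : (2 * m + 1 + 2) / 2 = m + 1 := by omega
    unfold Aq
    rw [e0, e1, e2]
    have r1 := ch_diag (2 * m + 1) m
    have r2 := ch_row (m + 1) (m + 1)
    push_cast at r1 r2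
    rw [show m + 1 + (m + 1) + 1 = 2 * m + 1 + 2 by omega,
      show m + 1 + (m + 1) = 2 * m + 1 + 1 by omega] at r2
    have hm1 : ((m : ℚ) + 1) ≠ 0 := by positivity
    have hm2 : ((m : ℚ) + 2) ≠ 0 := by positivity
    have f1 : ch (2 * m + 1 + 1) (m + 1) = (2 * (m : ℚ) + 2) * ch (2 * m + 1) m / (m + 1) := by
      rw [eq_div_iff hm1]; linear_combination r1
    have f2 : ch (2 * m + 1 + 2) (m + 1)
        = (2 * (m : ℚ) + 3) * ch (2 * m + 1 + 1) (m + 1) / (m + 2) := by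
      field_simp; linear_combination r2
    rw [f2, f1]
    unfold P2 P1 P0
    push_cast
    field_simp
    ring

lemma Sq_zero : Sq 0 = 1 := by
  unfold Sq Fq ch ct cb
  simp [Nat.centralBinom]

lemma Sq_one : Sq 1 = 1 := by
  unfold Sq Fq ch ct cb
  rw [Finset.sum_range_succ, Finset.sum_range_one]
  norm_num [Nat.centralBinom, catalan_one]

lemma Aq_zero : Aq 0 = 1 := by unfold Aq ch; simp
lemma Aq_one : Aq 1 = 1 := by unfold Aq ch; simp

lemma main : ∀ n, Sq n = Aq n := by
  intro n
  induction n using Nat.strong_induction_on with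
  | _ n ih =>
    match n, ih with
    | 0, _ => rw [Sq_zero, Aq_zero]
    | 1, _ => rw [Sq_one, Aq_one]
    | (m + 2), ih =>
      have h1 := ih (m + 1) (by omega)
      have h0 := ih m (by omega)
      have hS := recS m
      have hA := recA m
      rw [h1, h0] at hS
      have hP2 : P2 (m : ℚ) ≠ 0 := by unfold P2; positivity
      apply mul_left_cancel₀ hP2
      linarith [hS, hA]

end Stmt0Aux

theorem stmt_0 (n : ℕ) :
    ∑ k ∈ Finset.range (n + 1),
      (-1 : ℤ) ^ k * (n.choose k) * (catalan k) * ((2 * n - 2 * k).choose (n - k)) =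
    ((n.choose (n / 2) : ℤ)) ^ 2 := by
  have h := Stmt0Aux.main n
  unfold Stmt0Aux.Sq Stmt0Aux.Aq Stmt0Aux.Fq Stmt0Aux.ch Stmt0Aux.ct Stmt0Aux.cb at h
  unfold Nat.centralBinom at h
  have h2 : (∑ k ∈ Finset.range (n + 1),
      (-1 : ℚ) ^ k * (n.choose k) * (catalan k) * ((2 * n - 2 * k).choose (n - k)))
      = ((n.choose (n / 2) : ℚ)) ^ 2 := by
    rw [← h]
    apply Finset.sum_congr rfl
    intro k hk
    rw [Finset.mem_range] at hk
    have : 2 * n - 2 * k = 2 * (n - k) := by omega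
    rw [this]
  exact_mod_cast h2
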